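/- Let (X, δ) be a finite symmetric diversity with |X| = n and δ(A) = f(|A| − 1). Suppose there exist nonnegative λ_1, …, λ_{n−1} such that f(k) = Σ_{ℓ=1}^{n−1} λ_ℓ·(C(n,ℓ) − C(n−k−1, n−ℓ) − C(n−k−1, ℓ)) for all k = 1, …, n−1. Then δ is a nonnegative linear combination of split diversities: δ(A) = Σ_{B ⊆ X} w_B·δ_B(A) with w_B = λ_{|B|} ≥ 0, where δ_B(A) = 1 if A ∩ B and A \ B are both nonempty and 0 otherwise. -/

import Mathlib

open Finset

lemma count_split {X : Type*} [DecidableEq X] [Fintype X] (A : Finset X) (hA : A.Nonempty)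
    (j : ℕ) (hjn : j ≤ Fintype.card X) :
    ((Finset.univ.powersetCard j).filter
        (fun B : Finset X => (A ∩ B).Nonempty ∧ (A \ B).Nonempty)).card
      + ((Aᶜ.powersetCard j).card + (Aᶜ.powersetCard (Fintype.card X - j)).card)
      = Nat.choose (Fintype.card X) j := by
  classical
  set S := (Finset.univ : Finset X).powersetCard j with hS
  set P : Finset X → Prop := fun B => (A ∩ B).Nonempty ∧ (A \ B).Nonempty with hP
  have hsplit : (S.filter P).card + (S.filter (fun B => ¬ P B)).card = S.card :=
    card_filter_add_card_filter_not _
  have hneg : S.filter (fun B => ¬ P B)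
      = S.filter (fun B => A ∩ B = ∅) ∪ S.filter (fun B => A ⊆ B) := by
    ext B
    simp only [mem_filter, mem_union, hP, not_and_or, not_nonempty_iff_eq_empty,
      sdiff_eq_empty_iff_subset]
    tauto
  have hdisj : Disjoint (S.filter (fun B => A ∩ B = ∅)) (S.filter (fun B => A ⊆ B)) := by
    rw [disjoint_filter]
    intro B _ h1 h2
    obtain ⟨a, ha⟩ := hA
    have : a ∈ A ∩ B := mem_inter.mpr ⟨ha, h2 ha⟩
    simp [h1] at this
  have h1 : S.filter (fun B => A ∩ B = ∅) = Aᶜ.powersetCard j := by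
    ext B
    simp only [hS, mem_filter, mem_powersetCard, subset_univ, true_and,
      eq_empty_iff_forall_notMem, mem_inter, subset_iff, mem_compl, not_and]
    aesop
  have h2 : (S.filter (fun B => A ⊆ B)).card = (Aᶜ.powersetCard (Fintype.card X - j)).card := by
    have himg : (S.filter (fun B => A ⊆ B)).image compl = Aᶜ.powersetCard (Fintype.card X - j) := by
      ext C
      simp only [mem_image, mem_filter, hS, mem_powersetCard, subset_univ, true_and]
      constructor
      · rintro ⟨B, ⟨hBc, hAB⟩, rfl⟩
        exact ⟨compl_subset_compl.mpr hAB, by rw [card_compl, hBc]⟩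
      · rintro ⟨hCA, hCc⟩
        refine ⟨Cᶜ, ⟨?_, ?_⟩, compl_compl C⟩
        · rw [card_compl, hCc]; omega
        · calc A = Aᶜᶜ := (compl_compl A).symm
            _ ⊆ Cᶜ := compl_subset_compl.mpr hCA
    rw [← himg, card_image_of_injective _ compl_injective]
  rw [hneg, card_union_of_disjoint hdisj, h1, h2] at hsplit
  rw [hsplit]
  simp [hS, card_powersetCard]

/-- If a symmetric diversity's profile `f` is a nonnegative combination of the binomial
basis functions, then `δ` is a nonnegative combination of split diversities with
weights `w_B = λ_{|B|}`. -/
theorem stmt_14 {X : Type*} [DecidableEq X] [Fintype X] (n : ℕ) (hn : 1 < n)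
    (hcard : Fintype.card X = n) (δ : Finset X → ℝ) (f : ℕ → ℝ) (lam : ℕ → ℝ)
    (hpos : ∀ A : Finset X, 0 ≤ δ A)
    (hzero : ∀ A : Finset X, δ A = 0 ↔ A.card ≤ 1)
    (htri : ∀ A B C : Finset X, B.Nonempty → δ (A ∪ C) ≤ δ (A ∪ B) + δ (B ∪ C))
    (hδ : ∀ A : Finset X, A.Nonempty → δ A = f (A.card - 1))
    (hlampos : ∀ ℓ, 1 ≤ ℓ → ℓ ≤ n - 1 → 0 ≤ lam ℓ)
    (hf : ∀ k, 1 ≤ k → k ≤ n - 1 →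
      f k = ∑ ℓ ∈ Finset.Icc 1 (n - 1), lam ℓ *
        ((Nat.choose n ℓ : ℝ) - Nat.choose (n - k - 1) (n - ℓ) -
          Nat.choose (n - k - 1) ℓ)) :
    ∀ A : Finset X,
      δ A = ∑ B : Finset X, lam B.card *
        (if (A ∩ B).Nonempty ∧ (A \ B).Nonempty then 1 else 0) := by
  classical
  intro A
  by_cases hA2 : A.card ≤ 1
  · rw [(hzero A).2 hA2]
    symm
    apply Finset.sum_eq_zero
    intro B _
    rw [if_neg, mul_zero]
    rintro ⟨⟨x, hx⟩, ⟨y, hy⟩⟩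
    rw [Finset.mem_inter] at hx
    rw [Finset.mem_sdiff] at hy
    have hne : x ≠ y := fun h => hy.2 (h ▸ hx.2)
    have := Finset.one_lt_card.mpr ⟨x, hx.1, y, hy.1, hne⟩
    omega
  · push_neg at hA2
    have hm : 2 ≤ A.card := hA2
    have hmn : A.card ≤ n := by rw [← hcard, ← Finset.card_univ]; exact A.card_le_univ
    have hAne : A.Nonempty := Finset.card_pos.mp (by omega)
    have hcu : (Finset.univ : Finset X).card = n := by rw [Finset.card_univ, hcard]
    have hinner : ∀ j, (∑ B ∈ Finset.univ.powersetCard j, lam B.card *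
          (if (A ∩ B).Nonempty ∧ (A \ B).Nonempty then 1 else 0))
        = lam j * (((Finset.univ.powersetCard j)).filter
            (fun B => (A ∩ B).Nonempty ∧ (A \ B).Nonempty)).card := by
      intro j
      rw [Finset.sum_congr rfl (fun B hB => by
          rw [(Finset.mem_powersetCard.mp hB).2]), ← Finset.mul_sum, Finset.sum_boole]
    have hrhs : (∑ B : Finset X, lam B.card *
          (if (A ∩ B).Nonempty ∧ (A \ B).Nonempty then 1 else 0))
        = ∑ j ∈ Finset.Icc 1 (n - 1), lam j * (((Finset.univ.powersetCard j)).filter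
            (fun B => (A ∩ B).Nonempty ∧ (A \ B).Nonempty)).card := by
      rw [← Finset.powerset_univ, Finset.powerset_card_disjiUnion]
      erw [Finset.sum_disjiUnion]
      rw [Finset.sum_congr rfl (fun j _ => hinner j)]
      symm
      apply Finset.sum_subset
      · intro j hj
        rw [Finset.mem_Icc] at hj
        rw [Finset.mem_range, hcu]
        omega
      · intro j hj hj'
        rw [Finset.mem_range, hcu] at hj
        rw [Finset.mem_Icc] at hj'
        have : j = 0 ∨ j = n := by omega
        rcases this with rfl | rfl
        · simp [Finset.powersetCard_zero, Finset.filter_singleton]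
        · have h1 : A \ Finset.univ = ∅ :=
            Finset.sdiff_eq_empty_iff_subset.mpr (Finset.subset_univ A)
          rw [← hcu, Finset.powersetCard_self]
          simp [Finset.filter_singleton, h1]
    rw [hδ A hAne, hf (A.card - 1) (by omega) (by omega), hrhs]
    apply Finset.sum_congr rfl
    intro j hj
    rw [Finset.mem_Icc] at hj
    have hcnt := count_split A hAne j (by rw [hcard]; omega)
    rw [Finset.card_powersetCard, Finset.card_powersetCard, Finset.card_compl, hcard] at hcnt
    have harith : n - (A.card - 1) - 1 = n - A.card := by omega
    rw [harith]
    have := congrArg (Nat.cast : ℕ → ℝ) hcnt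
    push_cast at this
    congr 1
    linarith
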